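/- The tower number 𝔱 is a regular cardinal. -/

import Mathlib

open Cardinal

/-- The tower number `𝔱`. -/
noncomputable def towerNumber : Cardinal :=
  sInf { c : Cardinal | ∃ T : Set (Set ℕ), #T = c ∧ (∀ t ∈ T, t.Infinite) ∧
    (∀ s ∈ T, ∀ t ∈ T, (s \ t).Finite ∨ (t \ s).Finite) ∧
    ∀ s : Set ℕ, s.Infinite → ∃ t ∈ T, (s \ t).Infinite }

namespace TowerAux

/-- The tower condition. -/
def TowerCond (T : Set (Set ℕ)) : Prop :=
  (∀ t ∈ T, t.Infinite) ∧
  (∀ s ∈ T, ∀ t ∈ T, (s \ t).Finite ∨ (t \ s).Finite) ∧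
  ∀ s : Set ℕ, s.Infinite → ∃ t ∈ T, (s \ t).Infinite

lemma towerNumber_eq :
    towerNumber = sInf { c : Cardinal | ∃ T : Set (Set ℕ), #T = c ∧ TowerCond T } := rfl

lemma diff_subset_union (a b c : Set ℕ) : a \ c ⊆ (a \ b) ∪ (b \ c) := by
  intro x hx
  by_cases hb : x ∈ b
  · exact Or.inr ⟨hb, hx.2⟩
  · exact Or.inl ⟨hx.1, hb⟩

lemma almost_trans {a b c : Set ℕ} (h1 : (a \ b).Finite) (h2 : (b \ c).Finite) :
    (a \ c).Finite :=
  (h1.union h2).subset (diff_subset_union a b c)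

lemma exists_split {s : Set ℕ} (hs : s.Infinite) :
    ∃ s₁, s₁ ⊆ s ∧ s₁.Infinite ∧ (s \ s₁).Infinite := by
  classical
  let f : ℕ ↪ s := Set.Infinite.natEmbedding s hs
  let g : ℕ → ℕ := fun n => (f (2 * n) : ℕ)
  let g' : ℕ → ℕ := fun n => (f (2 * n + 1) : ℕ)
  have hg : Function.Injective g := by
    intro m n h
    have := f.injective (Subtype.coe_injective h)
    omega
  have hg' : Function.Injective g' := by
    intro m n h
    have := f.injective (Subtype.coe_injective h)
    omega
  refine ⟨Set.range g, ?_, Set.infinite_range_of_injective hg, ?_⟩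
  · rintro x ⟨n, rfl⟩
    exact (f (2 * n)).2
  · refine (Set.infinite_range_of_injective hg').mono ?_
    rintro x ⟨n, rfl⟩
    refine ⟨(f (2 * n + 1)).2, ?_⟩
    rintro ⟨m, hm⟩
    have := f.injective (Subtype.coe_injective hm)
    omega

/-- The property of being a well-ordered (by strict reverse almost-inclusion) chain
inside `T`, stated at the level of sets. -/
def Pd (T C : Set (Set ℕ)) : Prop :=
  C ⊆ T ∧
  (∀ a ∈ C, ∀ b ∈ C, (a \ b).Finite ∨ (b \ a).Finite) ∧
  (∀ a ∈ C, ∀ b ∈ C, a = b ∨ (a \ b).Infinite ∨ (b \ a).Infinite) ∧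
  (∀ X, X ⊆ C → X.Nonempty → ∃ m ∈ X, ∀ x ∈ X, ¬ (x \ m).Infinite)

lemma Pd_empty (T : Set (Set ℕ)) : Pd T ∅ := by
  refine ⟨Set.empty_subset _, by simp, by simp, ?_⟩
  intro X hX ⟨x, hx⟩
  exact absurd (hX hx) (Set.notMem_empty x)

/-- Zorn's lemma: there is a maximal well-ordered decreasing chain in `T`. -/
lemma zorn_tower (T : Set (Set ℕ)) :
    ∃ M, Pd T M ∧ ∀ u ∈ T, ¬ (∀ m ∈ M, (m \ u).Infinite ∧ (u \ m).Finite) := by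
  classical
  let α := {C : Set (Set ℕ) // Pd T C}
  let r : α → α → Prop := fun C D =>
    C.1 ⊆ D.1 ∧ ∀ d ∈ D.1, d ∉ C.1 → ∀ c' ∈ C.1, (c' \ d).Infinite
  have hrtrans : ∀ {a b c : α}, r a b → r b c → r a c := by
    intro a b c hab hbc
    refine ⟨hab.1.trans hbc.1, ?_⟩
    intro d hd hdna c' hc'
    by_cases hdb : d ∈ b.1
    · exact hab.2 d hdb hdna c' hc'
    · exact hbc.2 d hd hdb c' (hab.1 hc')
  have hbdd : ∀ c : Set α, IsChain r c → ∃ ub, ∀ a ∈ c, r a ub := by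
    intro c hc
    rcases c.eq_empty_or_nonempty with rfl | hcne
    · exact ⟨⟨∅, Pd_empty T⟩, by simp⟩
    · -- union of the chain
      set U : Set (Set ℕ) := {x | ∃ C ∈ c, x ∈ (C : α).1} with hU
      have hdir : ∀ C ∈ c, ∀ D ∈ c, ∃ E ∈ c, (C : α).1 ⊆ (E : α).1 ∧ (D : α).1 ⊆ (E : α).1 := by
        intro C hC D hD
        rcases eq_or_ne C D with rfl | hne
        · exact ⟨C, hC, subset_rfl, subset_rfl⟩
        · rcases hc hC hD hne with h | h
          · exact ⟨D, hD, h.1, subset_rfl⟩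
          · exact ⟨C, hC, subset_rfl, h.1⟩
      have hchU : ∀ a ∈ U, ∀ b ∈ U, (a \ b).Finite ∨ (b \ a).Finite := by
        rintro a ⟨C, hC, haC⟩ b ⟨D, hD, hbD⟩
        obtain ⟨E, hE, h1, h2⟩ := hdir C hC D hD
        exact E.2.2.1 a (h1 haC) b (h2 hbD)
      have htriU : ∀ a ∈ U, ∀ b ∈ U, a = b ∨ (a \ b).Infinite ∨ (b \ a).Infinite := by
        rintro a ⟨C, hC, haC⟩ b ⟨D, hD, hbD⟩
        obtain ⟨E, hE, h1, h2⟩ := hdir C hC D hD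
        exact E.2.2.2.1 a (h1 haC) b (h2 hbD)
      have hsubU : U ⊆ T := by
        rintro x ⟨C, hC, hxC⟩
        exact C.2.1 hxC
      have hwfU : ∀ X, X ⊆ U → X.Nonempty → ∃ m ∈ X, ∀ x ∈ X, ¬ (x \ m).Infinite := by
        intro X hX ⟨x₀, hx₀⟩
        obtain ⟨C₀, hC₀c, hx₀C₀⟩ := hX hx₀
        obtain ⟨m, hmY, hmin⟩ :=
          C₀.2.2.2.2 (X ∩ C₀.1) Set.inter_subset_right ⟨x₀, hx₀, hx₀C₀⟩
        refine ⟨m, hmY.1, ?_⟩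
        intro x hx hinf
        obtain ⟨D, hDc, hxD⟩ := hX hx
        by_cases hxC₀ : x ∈ C₀.1
        · exact hmin x ⟨hx, hxC₀⟩ hinf
        · have hrCD : r C₀ D := by
            rcases eq_or_ne C₀ D with rfl | hne
            · exact absurd hxD hxC₀
            · rcases hc hC₀c hDc hne with h | h
              · exact h
              · exact absurd (h.1 hxD) hxC₀
          have hmx : (m \ x).Infinite := hrCD.2 x hxD hxC₀ m hmY.2
          rcases hchU x (hX hx) m (hX hmY.1) with h | h
          · exact hinf h
          · exact hmx h
      refine ⟨⟨U, hsubU, hchU, htriU, hwfU⟩, ?_⟩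
      intro C hC
      refine ⟨fun x hx => ⟨C, hC, hx⟩, ?_⟩
      rintro d ⟨D, hDc, hdD⟩ hdC c' hc'
      rcases eq_or_ne C D with rfl | hne
      · exact absurd hdD hdC
      · rcases hc hC hDc hne with h | h
        · exact h.2 d hdD hdC c' hc'
        · exact absurd (h.1 hdD) hdC
  obtain ⟨M, hMmax⟩ := exists_maximal_of_chains_bounded hbdd @hrtrans
  refine ⟨M.1, M.2, ?_⟩
  intro u hu hall
  by_cases huM : u ∈ M.1
  · have := (hall u huM).1
    simp at this
  · -- extend M by u
    have hPd' : Pd T (insert u M.1) := by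
      refine ⟨Set.insert_subset hu M.2.1, ?_, ?_, ?_⟩
      · rintro a (rfl | ha) b (rfl | hb)
        · simp
        · exact Or.inl (hall b hb).2
        · exact Or.inr (hall a ha).2
        · exact M.2.2.1 a ha b hb
      · rintro a (rfl | ha) b (rfl | hb)
        · exact Or.inl rfl
        · exact Or.inr (Or.inr (hall b hb).1)
        · exact Or.inr (Or.inl (hall a ha).1)
        · exact M.2.2.2.1 a ha b hb
      · intro X hX hXne
        rcases (X ∩ M.1).eq_empty_or_nonempty with hY | hY
        · obtain ⟨x, hx⟩ := hXne
          have hxu : ∀ y ∈ X, y = u := by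
            intro y hy
            rcases hX hy with rfl | hyM
            · rfl
            · exact absurd (Set.mem_inter hy hyM) (by simp [hY])
          refine ⟨x, hx, ?_⟩
          intro z hz
          rw [hxu z hz, hxu x hx]
          simp
        · obtain ⟨m, hmY, hmin⟩ := M.2.2.2.2 (X ∩ M.1) Set.inter_subset_right hY
          refine ⟨m, hmY.1, ?_⟩
          intro x hx hinf
          rcases hX hx with rfl | hxM
          · exact hinf ((hall m hmY.2).2)
          · exact hmin x ⟨hx, hxM⟩ hinf
    have hle : r M ⟨insert u M.1, hPd'⟩ := by
      refine ⟨Set.subset_insert _ _, ?_⟩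
      rintro d (rfl | hd) hdn c' hc'
      · exact (hall c' hc').1
      · exact absurd hd hdn
    exact huM ((hMmax _ hle).1 (Set.mem_insert u M.1))

lemma towerCond_of_coinitial {T S : Set (Set ℕ)} (hT : TowerCond T) (hS : S ⊆ T)
    (hcoin : ∀ u ∈ T, ∃ b ∈ S, (b \ u).Finite) : TowerCond S := by
  refine ⟨fun t ht => hT.1 t (hS ht), fun a ha b hb => hT.2.1 a (hS ha) b (hS hb), ?_⟩
  intro s hs
  by_contra h
  push_neg at h
  have h' : ∀ t ∈ S, (s \ t).Finite := by
    intro t ht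
    exact h t ht
  obtain ⟨u, hu, hinf⟩ := hT.2.2 s hs
  obtain ⟨b, hb, hbu⟩ := hcoin u hu
  exact hinf (almost_trans (h' b hb) hbu)

/-- Any finite nonempty almost-inclusion chain has a minimum. -/
lemma finset_chain_min : ∀ F : Finset (Set ℕ),
    (∀ a ∈ F, ∀ b ∈ F, (a \ b).Finite ∨ (b \ a).Finite) → F.Nonempty →
    ∃ m ∈ F, ∀ t ∈ F, (m \ t).Finite := by
  classical
  intro F
  induction F using Finset.induction_on with
  | empty =>
    intro _ h
    exact absurd h (by simp)
  | @insert a F haF ih =>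
    intro hch _
    by_cases hF : F.Nonempty
    · obtain ⟨m, hmF, hmin⟩ := ih (fun x hx y hy =>
        hch x (Finset.mem_insert_of_mem hx) y (Finset.mem_insert_of_mem hy)) hF
      rcases hch a (Finset.mem_insert_self a F) m (Finset.mem_insert_of_mem hmF) with h | h
      · refine ⟨a, Finset.mem_insert_self a F, ?_⟩
        intro t ht
        rcases Finset.mem_insert.mp ht with rfl | htF
        · simp
        · exact almost_trans h (hmin t htF)
      · refine ⟨m, Finset.mem_insert_of_mem hmF, ?_⟩
        intro t ht
        rcases Finset.mem_insert.mp ht with rfl | htF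
        · exact h
        · exact hmin t htF
    · rw [Finset.not_nonempty_iff_eq_empty] at hF
      subst hF
      refine ⟨a, Finset.mem_insert_self a ∅, ?_⟩
      intro t ht
      rcases Finset.mem_insert.mp ht with rfl | htF
      · simp
      · simp at htF

lemma towerCond_infinite {T : Set (Set ℕ)} (hT : TowerCond T) : T.Infinite := by
  by_contra h
  rw [Set.not_infinite] at h
  have hne : T.Nonempty := by
    obtain ⟨t, ht, -⟩ := hT.2.2 Set.univ Set.infinite_univ
    exact ⟨t, ht⟩
  obtain ⟨m, hm, hmin⟩ := finset_chain_min h.toFinset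
    (fun a ha b hb =>
      hT.2.1 a (h.mem_toFinset.mp ha) b (h.mem_toFinset.mp hb))
    (by rwa [Set.Finite.toFinset_nonempty])
  have hmT : m ∈ T := h.mem_toFinset.mp hm
  obtain ⟨t, ht, hinf⟩ := hT.2.2 m (hT.1 m hmT)
  exact hinf (hmin t (h.mem_toFinset.mpr ht))

/-- There exists a tower: the defining set of cardinals is nonempty. -/
lemma towerSet_nonempty :
    {c : Cardinal | ∃ T : Set (Set ℕ), #T = c ∧ TowerCond T}.Nonempty := by
  obtain ⟨M, hPd, hmax⟩ := zorn_tower {s : Set ℕ | s.Infinite}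
  refine ⟨#M, M, rfl, fun t ht => hPd.1 ht, hPd.2.1, ?_⟩
  intro s hs
  by_contra h
  push_neg at h
  have h' : ∀ t ∈ M, (s \ t).Finite := fun t ht => h t ht
  obtain ⟨s₁, hs₁s, hs₁inf, hss₁⟩ := exists_split hs
  apply hmax s₁ hs₁inf
  intro m hm
  constructor
  · have : ((s \ s₁) \ (s \ m)).Infinite := hss₁.diff (h' m hm)
    refine this.mono ?_
    rintro x ⟨⟨hxs, hxns₁⟩, hxn⟩
    refine ⟨?_, hxns₁⟩
    by_contra hxm
    exact hxn ⟨hxs, hxm⟩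
  · exact (h' m hm).subset (fun x hx => ⟨hs₁s hx.1, hx.2⟩)

end TowerAux

theorem towerNumber_isRegular : towerNumber.IsRegular := by
  classical
  open TowerAux in
  have hSne := towerSet_nonempty
  have hmem := csInf_mem hSne
  rw [← towerNumber_eq] at hmem
  obtain ⟨T₀, hT₀card, hT₀⟩ := hmem
  -- 𝔱 is infinite
  have halef : ℵ₀ ≤ towerNumber := by
    rw [← hT₀card]
    haveI := (towerCond_infinite hT₀).to_subtype
    exact Cardinal.aleph0_le_mk _
  -- a well-ordered coinitial subchain of T₀
  obtain ⟨M, hPd, hmax⟩ := zorn_tower T₀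
  have hMsub : M ⊆ T₀ := hPd.1
  have hcoin : ∀ u ∈ T₀, ∃ m ∈ M, (m \ u).Finite := by
    intro u hu
    by_contra h
    push_neg at h
    apply hmax u hu
    intro m hm
    have h1 : (m \ u).Infinite := h m hm
    rcases hT₀.2.1 m (hMsub hm) u hu with h2 | h2
    · exact absurd h2 (h m hm)
    · exact ⟨h1, h2⟩
  have hMtower : TowerCond M := towerCond_of_coinitial hT₀ hMsub hcoin
  -- the well-order on M
  let rel : ↥M → ↥M → Prop := fun a b => ((a : Set ℕ) \ (b : Set ℕ)).Infinite
  haveI htri : IsTrichotomous ↥M rel := by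
    constructor
    intro a b hab hba
    rcases hPd.2.2.1 a.1 a.2 b.1 b.2 with h | h | h
    · exact Subtype.ext h
    · exact absurd h hab
    · exact absurd h hba
  haveI htrans : IsTrans ↥M rel := by
    constructor
    intro a b c hab hbc
    by_contra hac
    rw [Set.not_infinite] at hac
    have hcb : ((c : Set ℕ) \ (b : Set ℕ)).Finite := by
      rcases hPd.2.1 b.1 b.2 c.1 c.2 with h | h
      · exact absurd h hbc
      · exact h
    exact hab (almost_trans hac hcb)
  haveI hwf : IsWellFounded ↥M rel := by
    constructor
    rw [WellFounded.wellFounded_iff_has_min]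
    intro X hXne
    obtain ⟨x, hx⟩ := hXne
    obtain ⟨m', hm'X, hmin⟩ := hPd.2.2.2 (Subtype.val '' X)
      (by rintro y ⟨a, -, rfl⟩; exact a.2) ⟨x.1, Set.mem_image_of_mem _ hx⟩
    obtain ⟨mS, hmS, rfl⟩ := hm'X
    exact ⟨mS, hmS, fun y hy hr => hmin y.1 (Set.mem_image_of_mem _ hy) hr⟩
  haveI hwo : IsWellOrder ↥M rel := { }
  obtain ⟨S, hSunb, hScard⟩ : ∃ S : Set ↥M, (∀ a, ∃ b ∈ S, ¬ rel b a) ∧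
      Cardinal.mk ↥S = (Ordinal.type rel).cof := by
    letI inst : LinearOrder ↥M := linearOrderOfSTO rel
    haveI hwflt : @WellFoundedLT ↥M inst.toLT := hwo.toIsWellFounded
    obtain ⟨S, hS, hS'⟩ := @Order.exists_cof_eq ↥M inst.toPreorder
    refine ⟨S, fun a => ?_, ?_⟩
    · obtain ⟨b, hb, hab⟩ := hS a
      exact ⟨b, hb, fun hba => (@not_lt_of_ge _ inst.toPreorder _ _ hab) hba⟩
    · rw [hS']
      exact (@Ordinal.cof_type ↥M inst hwflt).symm
  set S' : Set (Set ℕ) := Subtype.val '' S with hS'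
  have hS'sub : S' ⊆ M := by rintro y ⟨a, -, rfl⟩; exact a.2
  have hS'coin : ∀ u ∈ M, ∃ b ∈ S', (b \ u).Finite := by
    intro u hu
    obtain ⟨b, hbS, hb⟩ := hSunb ⟨u, hu⟩
    exact ⟨b.1, Set.mem_image_of_mem _ hbS, Set.not_infinite.mp hb⟩
  have hS'tower : TowerCond S' := towerCond_of_coinitial hMtower hS'sub hS'coin
  have hS'card : #S' = (Ordinal.type rel).cof := by
    rw [hS', Cardinal.mk_image_eq Subtype.val_injective, hScard]
  -- towerNumber = cof (type rel)
  have hMcard : #M ≤ towerNumber := by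
    rw [← hT₀card]
    exact Cardinal.mk_le_mk_of_subset hMsub
  have hle : towerNumber ≤ (Ordinal.type rel).cof := by
    rw [← hS'card, towerNumber_eq]
    exact csInf_le' ⟨S', rfl, hS'tower⟩
  have hge : (Ordinal.type rel).cof ≤ towerNumber := by
    calc (Ordinal.type rel).cof ≤ (Ordinal.type rel).card := Ordinal.cof_le_card _
    _ = #↥M := Ordinal.card_type rel
    _ ≤ towerNumber := hMcard
  have hkey : towerNumber = (Ordinal.type rel).cof := le_antisymm hle hge
  exact ⟨halef, by rw [hkey]; exact (Ordinal.cof_ord_cof _).ge⟩
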